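/- Let f : X → ℝ be a filter on a Lefschetz complex, let y be a death-giving cell with f(y) = b and a the preceding value of f, and let Y_a be the set of birth-giving cells in X_a that are unpaired by the persistence pairing restricted to X_a. Then there is exactly one subset A ⊆ Y_a such that the sum of canonical cycles d' = Σ_{x∈A} d_x satisfies [d'] = [∂y] in the ℤ/2 homology of X_a. -/

import Mathlib

attribute [local instance] Classical.propDecidable

/-- A Lefschetz complex over an ambient finite type `C` of potential cells:
a finite set `cells` of cells, a dimension function, and a mod-2 incidence
function `bd` supported on `cells`, with `bd x y ≠ 0` only if
`dim y = dim x + 1`, and `∂∘∂ = 0` mod 2. -/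
structure LC (C : Type) [Fintype C] [DecidableEq C] : Type where
  cells : Finset C
  dim : C → ℤ
  bd : C → C → ZMod 2
  bd_mem : ∀ x y, bd x y ≠ 0 → x ∈ cells ∧ y ∈ cells
  bd_dim : ∀ x y, bd x y ≠ 0 → dim y = dim x + 1
  bd_sq : ∀ x z, ∑ y, bd x y * bd y z = 0

variable {C : Type} [Fintype C] [DecidableEq C]

/-- A filter on a Lefschetz complex: injective on the cells, and increasing
along the facet relation. -/
def IsFilter (L : LC C) (f : C → ℝ) : Prop :=
  (∀ x ∈ L.cells, ∀ y ∈ L.cells, f x = f y → x = y) ∧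
  ∀ x y, L.bd x y ≠ 0 → f x < f y

lemma LC.bd_self (L : LC C) (a : C) : L.bd a a = 0 := by
  by_contra h
  have := L.bd_dim a a h
  omega

/-- The boundary map of the quotient after canceling `(s,t)`:
`∂'(x,y) = ∂(x,y) + ∂(s,y)·∂(x,t)` on the remaining cells, `0` elsewhere. -/
def cancelBd (L : LC C) (s t : C) : C → C → ZMod 2 := fun x y =>
  if x ∈ L.cells \ {s, t} ∧ y ∈ L.cells \ {s, t} then
    L.bd x y + L.bd s y * L.bd x t
  else 0

private lemma zmod2_add_self : ∀ a : ZMod 2, a + a = 0 := by decide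

/-- The quotient Lefschetz complex after canceling the facet-cofacet pair `(s,t)`. -/
noncomputable def cancel (L : LC C) (s t : C) : LC C :=
  if hst : L.bd s t = 1 then
    { cells := L.cells \ {s, t}
      dim := L.dim
      bd := cancelBd L s t
      bd_mem := by
        intro x y h
        unfold cancelBd at h
        split_ifs at h with hc
        · exact hc
        · exact absurd rfl h
      bd_dim := by
        intro x y h
        unfold cancelBd at h
        split_ifs at h with hc
        · by_cases hxy : L.bd x y = 0
          · rw [hxy, zero_add] at h
            have h1 : L.bd s y ≠ 0 := fun hz => by simp [hz] at h
            have h2 : L.bd x t ≠ 0 := fun hz => by simp [hz] at h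
            have d1 := L.bd_dim s y h1
            have d2 := L.bd_dim x t h2
            have d3 := L.bd_dim s t (by simp [hst])
            omega
          · exact L.bd_dim x y hxy
        · exact absurd rfl h
      bd_sq := by
        intro x z
        by_cases hx : x ∈ L.cells \ {s, t}
        swap
        · refine Finset.sum_eq_zero fun y _ => ?_
          unfold cancelBd
          rw [if_neg (fun hc => hx hc.1), zero_mul]
        by_cases hz : z ∈ L.cells \ {s, t}
        swap
        · refine Finset.sum_eq_zero fun y _ => ?_
          have h0 : cancelBd L s t y z = 0 := by
            unfold cancelBd; rw [if_neg (fun hc => hz hc.2)]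
          rw [h0, mul_zero]
        have key : ∀ y, cancelBd L s t x y * cancelBd L s t y z =
            (L.bd x y + L.bd s y * L.bd x t) * (L.bd y z + L.bd s z * L.bd y t) := by
          intro y
          by_cases hy : y ∈ L.cells \ {s, t}
          · unfold cancelBd
            rw [if_pos ⟨hx, hy⟩, if_pos ⟨hy, hz⟩]
          · have lhs0 : cancelBd L s t x y = 0 := by
              unfold cancelBd; rw [if_neg (fun hc => hy hc.2)]
            rw [lhs0, zero_mul]
            by_cases hyc : y ∈ L.cells
            · have hyst : y = s ∨ y = t := by
                simp only [Finset.mem_sdiff, Finset.mem_insert, Finset.mem_singleton] at hy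
                tauto
              rcases hyst with rfl | rfl
              · simp [L.bd_self, hst, zmod2_add_self]
              · simp [L.bd_self, hst, zmod2_add_self]
            · have b1 : L.bd x y = 0 := by
                by_contra hb; exact hyc (L.bd_mem x y hb).2
              have b2 : L.bd s y = 0 := by
                by_contra hb; exact hyc (L.bd_mem s y hb).2
              have b3 : L.bd y z = 0 := by
                by_contra hb; exact hyc (L.bd_mem y z hb).1
              have b4 : L.bd y t = 0 := by
                by_contra hb; exact hyc (L.bd_mem y t hb).1
              rw [b1, b2, b3, b4]
              ring
        rw [Finset.sum_congr rfl fun y _ => key y]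
        have expand : ∀ y : C,
            (L.bd x y + L.bd s y * L.bd x t) * (L.bd y z + L.bd s z * L.bd y t) =
            L.bd x y * L.bd y z + L.bd s z * (L.bd x y * L.bd y t)
              + L.bd x t * (L.bd s y * L.bd y z)
              + L.bd x t * L.bd s z * (L.bd s y * L.bd y t) := by
          intro y; ring
        rw [Finset.sum_congr rfl fun y _ => expand y]
        simp only [Finset.sum_add_distrib, ← Finset.mul_sum, L.bd_sq, mul_zero,
          add_zero, zero_add] }
  else L

/-- The boundary operator on mod-2 chains. -/
noncomputable def bdOp (L : LC C) : (C → ZMod 2) →ₗ[ZMod 2] (C → ZMod 2) where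
  toFun c := fun x => ∑ y, L.bd x y * c y
  map_add' a b := by
    funext x
    simp [mul_add, Finset.sum_add_distrib]
  map_smul' m a := by
    funext x
    simp only [Pi.smul_apply, smul_eq_mul, RingHom.id_apply]
    rw [Finset.mul_sum]
    exact Finset.sum_congr rfl fun y _ => by ring

/-- The `p`-chains of a Lefschetz complex: mod-2 chains supported on cells of
dimension `p`. -/
def chains (L : LC C) (p : ℤ) : Submodule (ZMod 2) (C → ZMod 2) where
  carrier := {c | ∀ x, c x ≠ 0 → x ∈ L.cells ∧ L.dim x = p}
  zero_mem' := by intro x hx; simp at hx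
  add_mem' := by
    intro a b ha hb x hx
    by_cases h1 : a x = 0
    · refine hb x fun h2 => hx ?_
      show a x + b x = 0
      rw [h1, h2, add_zero]
    · exact ha x h1
  smul_mem' := by
    intro m c hc x hx
    refine hc x fun h0 => hx ?_
    show m * c x = 0
    rw [h0, mul_zero]

/-- The `p`-cycles. -/
noncomputable def cycles (L : LC C) (p : ℤ) : Submodule (ZMod 2) (C → ZMod 2) :=
  chains L p ⊓ LinearMap.ker (bdOp L)

/-- The `p`-boundaries. -/
noncomputable def boundaries (L : LC C) (p : ℤ) : Submodule (ZMod 2) (C → ZMod 2) :=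
  Submodule.map (bdOp L) (chains L (p + 1))

/-- The mod-2 homology of a Lefschetz complex in dimension `p`. -/
noncomputable def homology (L : LC C) (p : ℤ) : Type :=
  cycles L p ⧸ (Submodule.comap (cycles L p).subtype (boundaries L p))

noncomputable instance (L : LC C) (p : ℤ) : AddCommGroup (homology L p) :=
  inferInstanceAs (AddCommGroup (cycles L p ⧸
    Submodule.comap (cycles L p).subtype (boundaries L p)))

noncomputable instance (L : LC C) (p : ℤ) : Module (ZMod 2) (homology L p) :=
  inferInstanceAs (Module (ZMod 2) (cycles L p ⧸
    Submodule.comap (cycles L p).subtype (boundaries L p)))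

/-- The boundary of the cell `y`, as a chain. -/
def col (L : LC C) (y : C) : C → ZMod 2 := fun x => L.bd x y

/-- The chain `v` is the boundary of a chain supported on cells with filter
value `< b`. -/
def IsBdryBelow (L : LC C) (f : C → ℝ) (b : ℝ) (v : C → ZMod 2) : Prop :=
  ∃ c : C → ZMod 2, (∀ z, c z ≠ 0 → z ∈ L.cells ∧ f z < b) ∧ bdOp L c = v

/-- The cell `y` gives death: `[∂y] ≠ 0` in the homology of the sublevel set
strictly below `f y`. -/
def givesDeath (L : LC C) (f : C → ℝ) (y : C) : Prop :=
  y ∈ L.cells ∧ ¬ IsBdryBelow L f (f y) (col L y)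

/-- The cell `y` gives birth: `[∂y] = 0` in the homology of the sublevel set
strictly below `f y`. -/
def givesBirth (L : LC C) (f : C → ℝ) (y : C) : Prop :=
  y ∈ L.cells ∧ IsBdryBelow L f (f y) (col L y)

/-- The unique chain supported on death-giving cells below `y` whose boundary
is `∂y` (for birth-giving `y`); junk value otherwise. -/
noncomputable def canChain (L : LC C) (f : C → ℝ) (y : C) : C → ZMod 2 :=
  if h : ∃ c : C → ZMod 2,
      (∀ z, c z ≠ 0 → f z < f y ∧ givesDeath L f z) ∧ bdOp L c = col L y
  then h.choose else 0

/-- The canonical cycle `d_y = y + c_y` of a birth-giving cell `y`. -/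
noncomputable def canCycle (L : LC C) (f : C → ℝ) (y : C) : C → ZMod 2 :=
  Pi.single y 1 + canChain L f y

/-- `v` and `w` are homologous in the sublevel complex strictly below `b`. -/
def HomBelow (L : LC C) (f : C → ℝ) (b : ℝ) (v w : C → ZMod 2) : Prop :=
  ∃ c : C → ZMod 2, (∀ z, c z ≠ 0 → z ∈ L.cells ∧ f z < b) ∧ bdOp L c = v + w

/-- Sorting a finset of cells by increasing filter value (fueled recursion). -/
noncomputable def sortAux (f : C → ℝ) : ℕ → Finset C → List C
  | 0, _ => []
  | n + 1, S =>
    if h : S.Nonempty then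
      let m := (Finset.exists_min_image S f h).choose
      m :: sortAux f n (S.erase m)
    else []

/-- The cells of `L` listed in increasing order of filter value. -/
noncomputable def sortedCells (L : LC C) (f : C → ℝ) : List C :=
  sortAux f L.cells.card L.cells

/-- An element of `S` maximizing `f`, with default value. -/
noncomputable def maxCellD (f : C → ℝ) (S : Finset C) (dflt : C) : C :=
  if h : S.Nonempty then (Finset.exists_max_image S f h).choose else dflt

/-- One step of the persistence pairing algorithm: the state is the pair
(unpaired birth-giving cells, birth-death pairs found so far), and `y` is the
next cell in the filter order.  If `y` gives birth it is added to the unpaired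
set; if `y` gives death, the unique subset `A` of the unpaired cells whose
canonical cycles sum to a cycle homologous to `∂y` below `y` is found, and `y`
is paired with the cell of `A` of maximal filter value. -/
noncomputable def pairStep (L : LC C) (f : C → ℝ) (st : Finset C × Finset (C × C))
    (y : C) : Finset C × Finset (C × C) :=
  if givesBirth L f y then (insert y st.1, st.2)
  else
    let A : Finset C :=
      if h : ∃! A : Finset C, A ⊆ st.1 ∧
          HomBelow L f (f y) (∑ x ∈ A, canCycle L f x) (col L y)
      then h.exists.choose else ∅
    let s := maxCellD f A y
    (st.1.erase s, insert (s, y) st.2)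

/-- The state of the persistence pairing after processing all cells. -/
noncomputable def pairState (L : LC C) (f : C → ℝ) : Finset C × Finset (C × C) :=
  (sortedCells L f).foldl (pairStep L f) (∅, ∅)

/-- The birth-death pairs `BD(f)` of the filter `f`. -/
noncomputable def BD (L : LC C) (f : C → ℝ) : Finset (C × C) :=
  (pairState L f).2

/-- The state of the persistence pairing after processing the cells with
filter value `< b`. -/
noncomputable def stateBelow (L : LC C) (f : C → ℝ) (b : ℝ) :
    Finset C × Finset (C × C) :=
  ((sortedCells L f).filter (fun x => decide (f x < b))).foldl (pairStep L f) (∅, ∅)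

/-- The birth-giving cells with value `< b` that are unpaired by the
persistence pairing restricted to the sublevel set below `b`. -/
noncomputable def unpairedBelow (L : LC C) (f : C → ℝ) (b : ℝ) : Finset C :=
  (stateBelow L f b).1

/-- `(s,t)` is a shallow pair: `s` is the facet of `t` with maximal filter
value and `t` is the cofacet of `s` with minimal filter value. -/
def IsShallow (L : LC C) (f : C → ℝ) (s t : C) : Prop :=
  L.bd s t = 1 ∧ (∀ x, L.bd x t ≠ 0 → f x ≤ f s) ∧ (∀ y, L.bd s y ≠ 0 → f t ≤ f y)

/-- Cancel a list of pairs in sequence. -/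
noncomputable def cancelList : LC C → List (C × C) → LC C
  | L, [] => L
  | L, p :: ps => cancelList (cancel L p.1 p.2) ps

/-- The quotient after canceling the first `k` pairs of the sequence `Φ`. -/
noncomputable def quotAt (L : LC C) {n : ℕ} (Φ : Fin n → C × C) (k : ℕ) : LC C :=
  cancelList L ((List.ofFn Φ).take k)

/-- `Φ` is a shallow order: an enumeration of the birth-death pairs of `f`
such that each pair is shallow for the quotient obtained by canceling all
preceding pairs. -/
def IsShallowOrder (L : LC C) (f : C → ℝ) {n : ℕ} (Φ : Fin n → C × C) : Prop :=
  Function.Injective Φ ∧ (∀ i, Φ i ∈ BD L f) ∧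
  ∀ i : Fin n, IsShallow (quotAt L Φ i) f (Φ i).1 (Φ i).2

/-- The depth poset: the intersection of the strict total orders induced on
`BD(f)` by all shallow orders. -/
def DepthRel (L : LC C) (f : C → ℝ) (φ ψ : C × C) : Prop :=
  φ ∈ BD L f ∧ ψ ∈ BD L f ∧
  ∀ Φ : Fin (BD L f).card → C × C, IsShallowOrder L f Φ →
    ∀ i j : Fin (BD L f).card, Φ i = φ → Φ j = ψ → i < j

/-- The rank of the lower-left minor of the ordered boundary matrix with rows
the cells of filter value `≥ a` and columns the cells of filter value `≤ b`. -/
noncomputable def llRank (L : LC C) (f : C → ℝ) (a b : ℝ) : ℕ :=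
  Matrix.rank (Matrix.of fun (x : {x : C // x ∈ L.cells ∧ a ≤ f x})
    (y : {y : C // y ∈ L.cells ∧ f y ≤ b}) => L.bd x.1 y.1)

/-- `Φ` and `Ψ` differ by transposing two adjacent positions. -/
def AdjSwap {n : ℕ} (Φ Ψ : Fin n → C × C) : Prop :=
  ∃ (k : Fin n) (hk : (k : ℕ) + 1 < n),
    Ψ k = Φ ⟨k + 1, hk⟩ ∧ Ψ ⟨k + 1, hk⟩ = Φ k ∧
    ∀ i : Fin n, i ≠ k → i ≠ ⟨k + 1, hk⟩ → Ψ i = Φ i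
/-! ### Auxiliary development for Statement 6 -/

section Aux
open scoped symmDiff

private lemma zmod2_cases (a : ZMod 2) : a = 0 ∨ a = 1 := by
  have h : ∀ b : ZMod 2, b = 0 ∨ b = 1 := by decide
  exact h a

private lemma zmod2_aa (a : ZMod 2) : a + a = 0 := by
  have h : ∀ b : ZMod 2, b + b = 0 := by decide
  exact h a

private lemma zmod2_ne (a : ZMod 2) (h : a ≠ 0) : a = 1 := by
  rcases zmod2_cases a with h0 | h1
  · exact absurd h0 h
  · exact h1

lemma chain_add_self (w : C → ZMod 2) : w + w = 0 := by
  funext z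
  exact zmod2_aa (w z)

lemma bdOp_apply (L : LC C) (c : C → ZMod 2) (x : C) :
    bdOp L c x = ∑ u, L.bd x u * c u := rfl

lemma bdOp_single (L : LC C) (y : C) : bdOp L (Pi.single y 1) = col L y := by
  funext x
  rw [bdOp_apply]
  simp [Pi.single_apply, mul_ite, Finset.sum_ite_eq, col]

lemma col_cycle (L : LC C) (y : C) : bdOp L (col L y) = 0 := by
  funext x
  rw [bdOp_apply]
  exact L.bd_sq x y

/-- `c` is supported in `S`. -/
def SuppIn (S : Finset C) (c : C → ZMod 2) : Prop := ∀ z, c z ≠ 0 → z ∈ S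

/-- `w` is the boundary of a chain supported in `S`. -/
def InBdry (L : LC C) (S : Finset C) (w : C → ZMod 2) : Prop :=
  ∃ c, SuppIn S c ∧ bdOp L c = w

lemma suppIn_add {S : Finset C} {a b : C → ZMod 2} (ha : SuppIn S a) (hb : SuppIn S b) :
    SuppIn S (a + b) := by
  intro z hz
  by_cases h1 : a z = 0
  · refine hb z fun h2 => hz ?_
    show a z + b z = 0
    rw [h1, h2, add_zero]
  · exact ha z h1

lemma suppIn_mono {S T : Finset C} {a : C → ZMod 2} (hST : S ⊆ T) (ha : SuppIn S a) :
    SuppIn T a := fun z hz => hST (ha z hz)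

lemma inBdry_add {L : LC C} {S : Finset C} {v w : C → ZMod 2}
    (hv : InBdry L S v) (hw : InBdry L S w) : InBdry L S (v + w) := by
  obtain ⟨c, hc, rfl⟩ := hv
  obtain ⟨d, hd, rfl⟩ := hw
  exact ⟨c + d, suppIn_add hc hd, map_add _ _ _⟩

lemma inBdry_mono {L : LC C} {S T : Finset C} {w : C → ZMod 2}
    (hST : S ⊆ T) (hw : InBdry L S w) : InBdry L T w := by
  obtain ⟨c, hc, rfl⟩ := hw
  exact ⟨c, suppIn_mono hST hc, rfl⟩

lemma inBdry_supp {L : LC C} {f : C → ℝ} {b : ℝ} {S : Finset C}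
    (hf : IsFilter L f) (hS : ∀ z, z ∈ S ↔ z ∈ L.cells ∧ f z < b)
    {w : C → ZMod 2} (h : InBdry L S w) : SuppIn S w := by
  obtain ⟨c, hc, rfl⟩ := h
  intro z hz
  rw [bdOp_apply] at hz
  have hex : ∃ u, L.bd z u * c u ≠ 0 := by
    by_contra hcon
    push_neg at hcon
    exact hz (Finset.sum_eq_zero fun u _ => hcon u)
  obtain ⟨u, hu⟩ := hex
  have h1 : L.bd z u ≠ 0 := fun h0 => hu (by rw [h0, zero_mul])
  have h2 : c u ≠ 0 := fun h0 => hu (by rw [h0, mul_zero])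
  have hu1 := (hS u).1 (hc u h2)
  exact (hS z).2 ⟨(L.bd_mem z u h1).1, lt_trans (hf.2 z u h1) hu1.2⟩

lemma inBdry_insert_cases {L : LC C} {S : Finset C} {y : C} {w : C → ZMod 2}
    (h : InBdry L (insert y S) w) :
    InBdry L S w ∨ InBdry L S (w + col L y) := by
  obtain ⟨c, hc, hbc⟩ := h
  have happ : ∀ z, (c + c y • (Pi.single y 1 : C → ZMod 2)) z
      = c z + c y * (Pi.single y 1 : C → ZMod 2) z := fun z => rfl
  have hy0 : (c + c y • (Pi.single y 1 : C → ZMod 2)) y = 0 := by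
    rw [happ, Pi.single_eq_same, mul_one]
    exact zmod2_aa _
  have hsupp : SuppIn S (c + c y • (Pi.single y 1 : C → ZMod 2)) := by
    intro z hz
    by_cases hzy : z = y
    · subst hzy
      exact absurd hy0 hz
    · have hcz : c z ≠ 0 := by
        intro h0
        apply hz
        rw [happ, h0, Pi.single_eq_of_ne hzy, mul_zero, add_zero]
      rcases Finset.mem_insert.1 (hc z hcz) with h' | h'
      · exact absurd h' hzy
      · exact h'
  have hb2 : bdOp L (c + c y • (Pi.single y 1 : C → ZMod 2)) = w + c y • col L y := by
    rw [(bdOp L).map_add, (bdOp L).map_smul, bdOp_single, hbc]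
  rcases zmod2_cases (c y) with h0 | h1
  · left
    exact ⟨_, hsupp, by rw [hb2, h0, zero_smul, add_zero]⟩
  · right
    exact ⟨_, hsupp, by rw [hb2, h1, one_smul]⟩

lemma inBdry_insert_elim {L : LC C} {S : Finset C} {y : C} {w : C → ZMod 2}
    (hcol : InBdry L S (col L y)) (h : InBdry L (insert y S) w) : InBdry L S w := by
  rcases inBdry_insert_cases h with h1 | h1
  · exact h1
  · have h2 := inBdry_add h1 hcol
    rwa [add_assoc, chain_add_self, add_zero] at h2

lemma sum_symmDiff_chain (A B : Finset C) (g : C → (C → ZMod 2)) :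
    ∑ x ∈ A ∆ B, g x = ∑ x ∈ A, g x + ∑ x ∈ B, g x := by
  have h3 : ∑ x ∈ A ∆ B, g x = ∑ x ∈ A \ B, g x + ∑ x ∈ B \ A, g x := by
    rw [symmDiff_def, Finset.sup_eq_union]
    exact Finset.sum_union disjoint_sdiff_sdiff
  have h1 : ∑ x ∈ A ∩ B, g x + ∑ x ∈ A \ B, g x = ∑ x ∈ A, g x :=
    Finset.sum_inter_add_sum_sdiff A B g
  have h2 : ∑ x ∈ B ∩ A, g x + ∑ x ∈ B \ A, g x = ∑ x ∈ B, g x :=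
    Finset.sum_inter_add_sum_sdiff B A g
  have h4 : ∑ x ∈ B ∩ A, g x = ∑ x ∈ A ∩ B, g x := by rw [Finset.inter_comm]
  rw [h3, ← h1, ← h2, h4]
  generalize (∑ x ∈ A ∩ B, g x) = a
  generalize (∑ x ∈ A \ B, g x) = b
  generalize (∑ x ∈ B \ A, g x) = e
  have h5 : (a + b) + (a + e) = (b + e) + (a + a) := by abel
  rw [h5, chain_add_self, add_zero]

/-- The canonical-chain specification: a chain supported on earlier
death-giving cells whose boundary is `∂x`. -/
def DSpec (L : LC C) (f : C → ℝ) (x : C) : Prop :=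
  ∃ c : C → ZMod 2, (∀ z, c z ≠ 0 → f z < f x ∧ givesDeath L f z) ∧ bdOp L c = col L x

lemma canChain_spec {L : LC C} {f : C → ℝ} {x : C} (h : DSpec L f x) :
    (∀ z, canChain L f x z ≠ 0 → f z < f x ∧ givesDeath L f z) ∧
      bdOp L (canChain L f x) = col L x := by
  unfold DSpec at h
  unfold canChain
  rw [dif_pos h]
  exact h.choose_spec

lemma canCycle_bd {L : LC C} {f : C → ℝ} {x : C} (h : DSpec L f x) :
    bdOp L (canCycle L f x) = 0 := by
  unfold canCycle
  rw [(bdOp L).map_add, bdOp_single, (canChain_spec h).2, chain_add_self]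

lemma canCycle_supp {L : LC C} {f : C → ℝ} {x : C} (h : DSpec L f x) :
    ∀ z, canCycle L f x z ≠ 0 → z = x ∨ (f z < f x ∧ givesDeath L f z) := by
  intro z hz
  by_cases hzx : z = x
  · exact Or.inl hzx
  · right
    apply (canChain_spec h).1 z
    intro h0
    apply hz
    show (Pi.single x 1 : C → ZMod 2) z + canChain L f x z = 0
    rw [h0, Pi.single_eq_of_ne hzx, add_zero]

lemma canCycle_self {L : LC C} {f : C → ℝ} {x : C} (h : DSpec L f x) :
    canCycle L f x x = 1 := by
  have hcc : canChain L f x x = 0 := by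
    by_contra h0
    exact absurd ((canChain_spec h).1 x h0).1 (lt_irrefl _)
  show (Pi.single x 1 : C → ZMod 2) x + canChain L f x x = 1
  rw [Pi.single_eq_same, hcc, add_zero]

lemma canCycle_later {L : LC C} {f : C → ℝ} {x y : C} (h : DSpec L f x)
    (hxy : x ≠ y) (hfy : f x < f y) : canCycle L f x y = 0 := by
  have hcc : canChain L f x y = 0 := by
    by_contra h0
    exact absurd (lt_trans ((canChain_spec h).1 y h0).1 hfy) (lt_irrefl _)
  show (Pi.single x 1 : C → ZMod 2) y + canChain L f x y = 0
  rw [Pi.single_eq_of_ne (Ne.symm hxy), hcc, add_zero]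

lemma birth_not_death {L : LC C} {f : C → ℝ} {x : C} (h : givesBirth L f x) :
    ¬ givesDeath L f x := fun hd => hd.2 h.2

lemma cell_birth_or_death {L : LC C} {f : C → ℝ} {x : C} (hx : x ∈ L.cells) :
    givesBirth L f x ∨ givesDeath L f x := by
  by_cases h : IsBdryBelow L f (f x) (col L x)
  · exact Or.inl ⟨hx, h⟩
  · exact Or.inr ⟨hx, h⟩

lemma birth_dspec_aux (L : LC C) (f : C → ℝ) :
    ∀ n : ℕ, ∀ x : C, givesBirth L f x →
      ((L.cells.filter (fun z => f z < f x)).card ≤ n) → DSpec L f x := by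
  intro n
  induction n with
  | zero =>
    intro x hx hcard
    obtain ⟨c, hc, hbc⟩ := hx.2
    have hemp : L.cells.filter (fun z => f z < f x) = ∅ :=
      Finset.card_eq_zero.1 (Nat.le_zero.1 hcard)
    refine ⟨c, ?_, hbc⟩
    intro z hz
    exfalso
    have hz2 := hc z hz
    have hzm : z ∈ L.cells.filter (fun z => f z < f x) :=
      Finset.mem_filter.2 ⟨hz2.1, hz2.2⟩
    rw [hemp] at hzm
    exact absurd hzm (Finset.notMem_empty z)
  | succ n ih =>
    intro x hx hcard
    obtain ⟨c, hc, hbc⟩ := hx.2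
    set T := L.cells.filter (fun z => c z ≠ 0 ∧ givesBirth L f z) with hT
    have hTmem : ∀ z, z ∈ T ↔ z ∈ L.cells ∧ c z ≠ 0 ∧ givesBirth L f z := by
      intro z; rw [hT, Finset.mem_filter]
    have hTspec : ∀ z ∈ T, DSpec L f z := by
      intro z hz
      obtain ⟨hz1, hz2, hz3⟩ := (hTmem z).1 hz
      have hfz : f z < f x := (hc z hz2).2
      apply ih z hz3
      have hsub : L.cells.filter (fun w => f w < f z) ⊆
          L.cells.filter (fun w => f w < f x) := by
        intro w hw
        rw [Finset.mem_filter] at hw ⊢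
        exact ⟨hw.1, lt_trans hw.2 hfz⟩
      have hlt : (L.cells.filter (fun w => f w < f z)).card <
          (L.cells.filter (fun w => f w < f x)).card := by
        apply Finset.card_lt_card
        rw [Finset.ssubset_iff_of_subset hsub]
        exact ⟨z, Finset.mem_filter.2 ⟨hz1, hfz⟩, by
          simp [Finset.mem_filter, lt_irrefl]⟩
      omega
    refine ⟨c + ∑ z ∈ T, canCycle L f z, ?_, ?_⟩
    · -- support on death cells below x
      intro w hw
      have hval : (c + ∑ z ∈ T, canCycle L f z) w
          = c w + ((∑ z ∈ T, (Pi.single z (1 : ZMod 2) : C → ZMod 2)) w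
            + (∑ z ∈ T, canChain L f z) w) := by
        show c w + (∑ z ∈ T, canCycle L f z) w = _
        congr 1
        rw [← Pi.add_apply]
        congr 1
        rw [← Finset.sum_add_distrib]
        rfl
      have hsingle : (∑ z ∈ T, (Pi.single z (1 : ZMod 2) : C → ZMod 2)) w
          = if w ∈ T then 1 else 0 := by
        rw [Finset.sum_apply]
        simp only [Pi.single_apply]
        rw [Finset.sum_ite_eq T w (fun _ => (1 : ZMod 2))]
      by_cases hwd : givesDeath L f w
      · refine ⟨?_, hwd⟩
        by_cases hcw : c w = 0
        · -- some canChain contributes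
          have hsum : (∑ z ∈ T, canCycle L f z) w ≠ 0 := by
            intro h0
            apply hw
            show c w + (∑ z ∈ T, canCycle L f z) w = 0
            rw [hcw, h0, add_zero]
          have : ∃ z ∈ T, canCycle L f z w ≠ 0 := by
            by_contra hcon
            push_neg at hcon
            rw [Finset.sum_apply] at hsum
            exact hsum (Finset.sum_eq_zero hcon)
          obtain ⟨z, hzT, hzw⟩ := this
          rcases canCycle_supp (hTspec z hzT) w hzw with rfl | ⟨hlt, _⟩
          · exact absurd ((hTmem w).1 hzT).2.2 (fun hb => birth_not_death hb hwd)
          · exact lt_trans hlt (hc z ((hTmem z).1 hzT).2.1).2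
        · exact (hc w hcw).2
      · -- w not death-giving: contradiction
        exfalso
        have hchain0 : (∑ z ∈ T, canChain L f z) w = 0 := by
          rw [Finset.sum_apply]
          apply Finset.sum_eq_zero
          intro z hz
          by_contra h0
          exact hwd ((canChain_spec (hTspec z hz)).1 w h0).2
        by_cases hwT : w ∈ T
        · apply hw
          rw [hval, hsingle, if_pos hwT, hchain0, add_zero]
          rw [zmod2_ne (c w) ((hTmem w).1 hwT).2.1]
          exact zmod2_aa 1
        · have hcw : c w ≠ 0 := by
            intro h0
            apply hw
            rw [hval, hsingle, if_neg hwT, hchain0, add_zero, h0, add_zero]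
          have hwc := hc w hcw
          rcases cell_birth_or_death (L := L) (f := f) hwc.1 with hb | hd
          · exact hwT ((hTmem w).2 ⟨hwc.1, hcw, hb⟩)
          · exact hwd hd
    · rw [(bdOp L).map_add, map_sum (bdOp L) _ _, hbc]
      rw [Finset.sum_eq_zero (fun z hz => canCycle_bd (hTspec z hz)), add_zero]

lemma birth_dspec {L : LC C} {f : C → ℝ} {x : C} (hx : givesBirth L f x) :
    DSpec L f x :=
  birth_dspec_aux L f _ x hx le_rfl

/-! ### Sorted list facts -/

lemma sortAux_spec (f : C → ℝ) :
    ∀ n (S : Finset C), S.card ≤ n →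
      (∀ x, x ∈ sortAux f n S ↔ x ∈ S) ∧
      (sortAux f n S).Pairwise (fun a b => f a ≤ f b ∧ a ≠ b) := by
  intro n
  induction n with
  | zero =>
    intro S hS
    have hS0 : S = ∅ := Finset.card_eq_zero.1 (Nat.le_zero.1 hS)
    subst hS0
    constructor
    · intro x
      simp [sortAux]
    · simp [sortAux]
  | succ n ih =>
    intro S hS
    by_cases h : S.Nonempty
    · have heq : sortAux f (n + 1) S =
          (Finset.exists_min_image S f h).choose ::
            sortAux f n (S.erase (Finset.exists_min_image S f h).choose) := by
        rw [sortAux, dif_pos h]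
      set m := (Finset.exists_min_image S f h).choose with hm
      have hmspec := (Finset.exists_min_image S f h).choose_spec
      obtain ⟨hmS, hmmin⟩ := hmspec
      have hcard : (S.erase m).card ≤ n := by
        rw [Finset.card_erase_of_mem hmS]
        omega
      obtain ⟨hmem, hpw⟩ := ih (S.erase m) hcard
      rw [heq]
      constructor
      · intro x
        rw [List.mem_cons, hmem, Finset.mem_erase]
        constructor
        · rintro (rfl | ⟨_, hx⟩)
          · exact hmS
          · exact hx
        · intro hx
          by_cases hxm : x = m
          · exact Or.inl hxm
          · exact Or.inr ⟨hxm, hx⟩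
      · refine List.Pairwise.cons ?_ hpw
        intro a ha
        have haS := (hmem a).1 ha
        rw [Finset.mem_erase] at haS
        exact ⟨hmmin a haS.2, Ne.symm haS.1⟩
    · have heq : sortAux f (n + 1) S = [] := by rw [sortAux, dif_neg h]
      rw [heq]
      rw [Finset.not_nonempty_iff_eq_empty] at h
      subst h
      simp

lemma sorted_filter_spec (L : LC C) (f : C → ℝ) (hf : IsFilter L f) (b : ℝ) :
    (∀ x, x ∈ (sortedCells L f).filter (fun x => decide (f x < b)) ↔
      x ∈ L.cells ∧ f x < b) ∧
    ((sortedCells L f).filter (fun x => decide (f x < b))).Pairwise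
      (fun a b => f a < f b) := by
  obtain ⟨hmem, hpw⟩ := sortAux_spec f L.cells.card L.cells le_rfl
  have hmem' : ∀ x, x ∈ sortedCells L f ↔ x ∈ L.cells := hmem
  constructor
  · intro x
    rw [List.mem_filter, hmem', decide_eq_true_iff]
  · have hsub : ((sortedCells L f).filter (fun x => decide (f x < b))).Pairwise
        (fun a b => f a ≤ f b ∧ a ≠ b) :=
      List.Pairwise.sublist List.filter_sublist hpw
    refine List.Pairwise.imp_of_mem ?_ hsub
    intro a c ha hc hac
    have haM : a ∈ L.cells := ((List.mem_filter.1 ha).1 |> (hmem' a).1)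
    have hcM : c ∈ L.cells := ((List.mem_filter.1 hc).1 |> (hmem' c).1)
    rcases lt_or_eq_of_le hac.1 with h | h
    · exact h
    · exact absurd (hf.1 a haM c hcM h) hac.2

/-! ### The invariant -/

/-- The invariant of the persistence pairing: the canonical cycles of the
unpaired birth cells `Y` parametrize, via subset sums, the homology classes of
cycles supported in the processed part `S`, uniquely. -/
def PairInv (L : LC C) (f : C → ℝ) (S Y : Finset C) : Prop :=
  (∀ x ∈ Y, x ∈ S ∧ givesBirth L f x) ∧
  ∀ v : C → ZMod 2, SuppIn S v → bdOp L v = 0 →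
    ∃! A : Finset C, A ⊆ Y ∧ InBdry L S (v + ∑ x ∈ A, canCycle L f x)

lemma sum_canCycle_supp {L : LC C} {f : C → ℝ} {S Y A : Finset C} {b : ℝ}
    (hS : ∀ z, z ∈ S ↔ z ∈ L.cells ∧ f z < b)
    (hY : ∀ x ∈ Y, x ∈ S ∧ givesBirth L f x) (hA : A ⊆ Y) :
    SuppIn S (∑ x ∈ A, canCycle L f x) := by
  intro z hz
  rw [Finset.sum_apply] at hz
  have : ∃ x ∈ A, canCycle L f x z ≠ 0 := by
    by_contra hcon
    push_neg at hcon
    exact hz (Finset.sum_eq_zero hcon)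
  obtain ⟨x, hxA, hxz⟩ := this
  have hx := hY x (hA hxA)
  rcases canCycle_supp (birth_dspec hx.2) z hxz with rfl | ⟨hlt, hd⟩
  · exact hx.1
  · have hfx : f x < b := ((hS x).1 hx.1).2
    exact (hS z).2 ⟨hd.1, lt_trans hlt hfx⟩

lemma sum_canCycle_at {L : LC C} {f : C → ℝ} {Y B : Finset C} {y : C}
    (hB : B ⊆ Y) (hY : ∀ x ∈ Y, givesBirth L f x ∧ f x < f y ∧ x ≠ y) :
    (∑ x ∈ B, canCycle L f x) y = 0 := by
  rw [Finset.sum_apply]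
  apply Finset.sum_eq_zero
  intro x hx
  have h := hY x (hB hx)
  exact canCycle_later (birth_dspec h.1) h.2.2 h.2.1

lemma inv_birth (L : LC C) (f : C → ℝ) (hf : IsFilter L f) {S Y : Finset C} {y : C}
    (hy : givesBirth L f y) (hyS : y ∉ S)
    (hS : ∀ z, z ∈ S ↔ z ∈ L.cells ∧ f z < f y) (h : PairInv L f S Y) :
    PairInv L f (insert y S) (insert y Y) := by
  obtain ⟨hY, hEx⟩ := h
  have hyY : y ∉ Y := fun hyy => hyS (hY y hyy).1
  have hyd : DSpec L f y := birth_dspec hy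
  have hYprop : ∀ x ∈ Y, givesBirth L f x ∧ f x < f y ∧ x ≠ y := by
    intro x hx
    have h1 := hY x hx
    exact ⟨h1.2, ((hS x).1 h1.1).2, fun he => hyS (he ▸ h1.1)⟩
  have hcol : InBdry L S (col L y) := by
    obtain ⟨c, hc, hbc⟩ := hy.2
    exact ⟨c, fun z hz => (hS z).2 (hc z hz), hbc⟩
  constructor
  · intro x hx
    rcases Finset.mem_insert.1 hx with rfl | hx
    · exact ⟨Finset.mem_insert_self _ _, hy⟩
    · exact ⟨Finset.mem_insert_of_mem (hY x hx).1, (hY x hx).2⟩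
  · intro v hv hbv
    have hcy : canCycle L f y y = 1 := canCycle_self hyd
    have hv0S : SuppIn S (v + v y • canCycle L f y) := by
      intro z hz
      by_cases hzy : z = y
      · exfalso
        apply hz
        have hyval : (v + v y • canCycle L f y) y = 0 := by
          show v y + v y * canCycle L f y y = 0
          rw [hcy, mul_one]
          exact zmod2_aa _
        rw [hzy]
        exact hyval
      · have : v z ≠ 0 ∨ canCycle L f y z ≠ 0 := by
          by_contra hcon
          push_neg at hcon
          apply hz
          show v z + v y * canCycle L f y z = 0
          rw [hcon.1, hcon.2, mul_zero, add_zero]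
        rcases this with h1 | h2
        · rcases Finset.mem_insert.1 (hv z h1) with h' | h'
          · exact absurd h' hzy
          · exact h'
        · rcases canCycle_supp hyd z h2 with rfl | ⟨hlt, hd⟩
          · exact absurd rfl hzy
          · exact (hS z).2 ⟨hd.1, hlt⟩
    have hbv0 : bdOp L (v + v y • canCycle L f y) = 0 := by
      rw [(bdOp L).map_add, (bdOp L).map_smul, canCycle_bd hyd, smul_zero, hbv, add_zero]
    obtain ⟨A₀, ⟨hA₀Y, hA₀B⟩, hA₀u⟩ := hEx _ hv0S hbv0
    have huniq : ∀ B : Finset C, B ⊆ insert y Y →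
        InBdry L (insert y S) (v + ∑ x ∈ B, canCycle L f x) →
        B = if v y = 0 then A₀ else insert y A₀ := by
      intro B hBY hBb
      have hBS : InBdry L S (v + ∑ x ∈ B, canCycle L f x) :=
        inBdry_insert_elim hcol hBb
      have hval0 : (v + ∑ x ∈ B, canCycle L f x) y = 0 := by
        by_contra h0
        exact hyS (inBdry_supp hf hS hBS y h0)
      have heval : v y + (∑ x ∈ B, canCycle L f x) y = 0 := hval0
      by_cases hyB : y ∈ B
      · have hsum : (∑ x ∈ B, canCycle L f x) y = 1 := by
          rw [← Finset.add_sum_erase B _ hyB, Pi.add_apply, hcy]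
          rw [sum_canCycle_at (fun x hx => by
            have := Finset.mem_erase.1 hx
            rcases Finset.mem_insert.1 (hBY this.2) with h' | h'
            · exact absurd h' this.1
            · exact h') hYprop, add_zero]
        have hvy : v y = 1 := by
          rcases zmod2_cases (v y) with h0 | h1
          · rw [h0, hsum, zero_add] at heval; exact absurd heval one_ne_zero
          · exact h1
        rw [if_neg (by rw [hvy]; exact one_ne_zero)]
        have hBek : B.erase y ⊆ Y := by
          intro x hx
          have := Finset.mem_erase.1 hx
          rcases Finset.mem_insert.1 (hBY this.2) with h' | h'
          · exact absurd h' this.1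
          · exact h'
        have hBsum : (v + v y • canCycle L f y) + ∑ x ∈ B.erase y, canCycle L f x
            = v + ∑ x ∈ B, canCycle L f x := by
          rw [hvy, one_smul, ← Finset.add_sum_erase B _ hyB]
          abel
        have := hA₀u (B.erase y) ⟨hBek, by rw [hBsum]; exact hBS⟩
        rw [← this, Finset.insert_erase hyB]
      · have hsum : (∑ x ∈ B, canCycle L f x) y = 0 := by
          apply sum_canCycle_at (fun x hx => ?_) hYprop
          rcases Finset.mem_insert.1 (hBY hx) with h' | h'
          · exact absurd (h' ▸ hx) hyB
          · exact h'
        have hvy : v y = 0 := by rw [hsum, add_zero] at heval; exact heval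
        rw [if_pos hvy]
        have hBY' : B ⊆ Y := by
          intro x hx
          rcases Finset.mem_insert.1 (hBY hx) with h' | h'
          · exact absurd (h' ▸ hx) hyB
          · exact h'
        apply hA₀u B ⟨hBY', ?_⟩
        rwa [hvy, zero_smul, add_zero]
    refine ⟨if v y = 0 then A₀ else insert y A₀, ⟨?_, ?_⟩, fun B hB => huniq B hB.1 hB.2⟩
    · split_ifs
      · exact hA₀Y.trans (Finset.subset_insert _ _)
      · exact Finset.insert_subset_insert _ hA₀Y
    · have hyA₀ : y ∉ A₀ := fun hc => hyY (hA₀Y hc)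
      split_ifs with hvy
      · rw [hvy, zero_smul, add_zero] at hA₀B
        exact inBdry_mono (Finset.subset_insert _ _) hA₀B
      · have hvy1 : v y = 1 := zmod2_ne _ hvy
        have : v + ∑ x ∈ insert y A₀, canCycle L f x
            = (v + v y • canCycle L f y) + ∑ x ∈ A₀, canCycle L f x := by
          rw [Finset.sum_insert hyA₀, hvy1, one_smul]
          abel
        rw [this]
        exact inBdry_mono (Finset.subset_insert _ _) hA₀B

lemma inv_death (L : LC C) (f : C → ℝ) (hf : IsFilter L f) {S Y A : Finset C} {y s : C}
    (hy : givesDeath L f y) (hyS : y ∉ S)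
    (hS : ∀ z, z ∈ S ↔ z ∈ L.cells ∧ f z < f y) (h : PairInv L f S Y)
    (hAY : A ⊆ Y) (hAB : InBdry L S (col L y + ∑ x ∈ A, canCycle L f x))
    (hsA : s ∈ A) :
    PairInv L f (insert y S) (Y.erase s) := by
  obtain ⟨hY, hEx⟩ := h
  have hcoln : ¬ InBdry L S (col L y) := by
    intro ⟨c, hc, hbc⟩
    exact hy.2 ⟨c, fun z hz => (hS z).1 (hc z hz), hbc⟩
  have hcolS : SuppIn S (col L y) := by
    intro z hz
    exact (hS z).2 ⟨(L.bd_mem z y hz).1, hf.2 z y hz⟩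
  have hcolu : ∀ D : Finset C, D ⊆ Y →
      InBdry L S (col L y + ∑ x ∈ D, canCycle L f x) → D = A := by
    obtain ⟨A', _, hu⟩ := hEx (col L y) hcolS (col_cycle L y)
    intro D hD1 hD2
    rw [hu D ⟨hD1, hD2⟩, hu A ⟨hAY, hAB⟩]
  constructor
  · intro x hx
    have hx' := Finset.mem_of_mem_erase hx
    exact ⟨Finset.mem_insert_of_mem (hY x hx').1, (hY x hx').2⟩
  · intro v hv hbv
    have hvy : v y = 0 := by
      by_contra h0
      apply hcoln
      have hvy1 : v y = 1 := zmod2_ne _ h0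
      refine ⟨v + Pi.single y 1, ?_, ?_⟩
      · intro z hz
        by_cases hzy : z = y
        · exfalso
          apply hz
          subst hzy
          show v z + (Pi.single z 1 : C → ZMod 2) z = 0
          rw [Pi.single_eq_same, hvy1]
          exact zmod2_aa 1
        · have hvz : v z ≠ 0 := by
            intro h1
            apply hz
            show v z + (Pi.single y 1 : C → ZMod 2) z = 0
            rw [h1, Pi.single_eq_of_ne hzy, add_zero]
          rcases Finset.mem_insert.1 (hv z hvz) with h' | h'
          · exact absurd h' hzy
          · exact h'
      · rw [(bdOp L).map_add, bdOp_single, hbv, zero_add]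
    have hvS : SuppIn S v := by
      intro z hz
      rcases Finset.mem_insert.1 (hv z hz) with h' | h'
      · exact absurd (h' ▸ hz) (fun hc => hc hvy)
      · exact h'
    obtain ⟨A₁, ⟨hA₁Y, hA₁B⟩, hA₁u⟩ := hEx v hvS hbv
    have hins : ∀ B : Finset C, B ⊆ Y.erase s →
        InBdry L (insert y S) (v + ∑ x ∈ B, canCycle L f x) →
        InBdry L (insert y S) (v + ∑ x ∈ B, canCycle L f x) := fun _ _ h => h
    -- existence witness
    have hCand : ∃ B : Finset C, B ⊆ Y.erase s ∧
        InBdry L (insert y S) (v + ∑ x ∈ B, canCycle L f x) := by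
      by_cases hsA₁ : s ∈ A₁
      · refine ⟨A₁ ∆ A, ?_, ?_⟩
        · intro x hx
          rcases Finset.mem_symmDiff.1 hx with ⟨h1, h2⟩ | ⟨h1, h2⟩
          · exact Finset.mem_erase.2 ⟨fun he => h2 (he ▸ hsA), hA₁Y h1⟩
          · exact Finset.mem_erase.2 ⟨fun he => h2 (he ▸ hsA₁), hAY h1⟩
        · obtain ⟨c1, hc1, hbc1⟩ := hA₁B
          obtain ⟨c2, hc2, hbc2⟩ := hAB
          refine ⟨c1 + c2 + Pi.single y 1, ?_, ?_⟩
          · apply suppIn_add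
            · apply suppIn_mono (Finset.subset_insert _ _)
              exact suppIn_add hc1 hc2
            · intro z hz
              have hzy : z = y := by
                by_contra hzy
                exact hz (Pi.single_eq_of_ne hzy 1)
              rw [hzy]
              exact Finset.mem_insert_self _ _
          · rw [(bdOp L).map_add, (bdOp L).map_add, bdOp_single, hbc1, hbc2, sum_symmDiff_chain]
            have : (v + ∑ x ∈ A₁, canCycle L f x) +
                (col L y + ∑ x ∈ A, canCycle L f x) + col L y
                = (v + (∑ x ∈ A₁, canCycle L f x + ∑ x ∈ A, canCycle L f x))
                  + (col L y + col L y) := by abel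
            rw [this, chain_add_self, add_zero]
      · refine ⟨A₁, fun x hx => Finset.mem_erase.2 ⟨fun he => hsA₁ (he ▸ hx), hA₁Y hx⟩, ?_⟩
        exact inBdry_mono (Finset.subset_insert _ _) hA₁B
    obtain ⟨B₀, hB₀1, hB₀2⟩ := hCand
    refine ⟨B₀, ⟨hB₀1, hB₀2⟩, ?_⟩
    -- uniqueness
    have huniq : ∀ B1 B2 : Finset C, B1 ⊆ Y.erase s → B2 ⊆ Y.erase s →
        InBdry L (insert y S) (v + ∑ x ∈ B1, canCycle L f x) →
        InBdry L (insert y S) (v + ∑ x ∈ B2, canCycle L f x) → B1 = B2 := by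
      intro B1 B2 hB1 hB2 hb1 hb2
      have hD : InBdry L (insert y S) (∑ x ∈ B1 ∆ B2, canCycle L f x) := by
        have := inBdry_add hb1 hb2
        have hre : (v + ∑ x ∈ B1, canCycle L f x) + (v + ∑ x ∈ B2, canCycle L f x)
            = (∑ x ∈ B1, canCycle L f x + ∑ x ∈ B2, canCycle L f x) + (v + v) := by
          abel
        rwa [hre, chain_add_self, add_zero, ← sum_symmDiff_chain] at this
      have hDY : B1 ∆ B2 ⊆ Y := by
        intro x hx
        rcases Finset.mem_symmDiff.1 hx with ⟨h1, _⟩ | ⟨h1, _⟩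
        · exact Finset.mem_of_mem_erase (hB1 h1)
        · exact Finset.mem_of_mem_erase (hB2 h1)
      have hDs : s ∉ B1 ∆ B2 := by
        intro hx
        rcases Finset.mem_symmDiff.1 hx with ⟨h1, _⟩ | ⟨h1, _⟩
        · exact (Finset.mem_erase.1 (hB1 h1)).1 rfl
        · exact (Finset.mem_erase.1 (hB2 h1)).1 rfl
      rcases inBdry_insert_cases hD with hcase | hcase
      · -- the symmetric difference sums to a boundary: it must be ∅
        obtain ⟨A', _, hu⟩ := hEx 0 (fun z hz => absurd rfl hz) ((bdOp L).map_zero)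
        have h1 := hu (B1 ∆ B2) ⟨hDY, by rwa [zero_add]⟩
        have h2 := hu ∅ ⟨Finset.empty_subset _, by
          rw [Finset.sum_empty, add_zero]
          exact ⟨0, fun z hz => absurd rfl hz, (bdOp L).map_zero⟩⟩
        have h3 : B1 ∆ B2 = (∅ : Finset C) := by rw [h1, h2]
        have h4 : B1 ∆ B2 = (⊥ : Finset C) := by
          rw [Finset.bot_eq_empty]
          exact h3
        exact symmDiff_eq_bot.1 h4
      · -- it would have to be A, but s ∈ A and s ∉ B1 ∆ B2
        exfalso
        have : B1 ∆ B2 = A := by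
          apply hcolu _ hDY
          rwa [add_comm] at hcase
        exact hDs (this ▸ hsA)
    intro B hB
    exact huniq B B₀ hB.1 hB₀1 hB.2 hB₀2

/-! ### Unfolding the algorithm -/

lemma pairStep_birth (L : LC C) (f : C → ℝ) (st : Finset C × Finset (C × C)) (y : C)
    (hb : givesBirth L f y) : (pairStep L f st y).1 = insert y st.1 := by
  rw [pairStep, if_pos hb]

lemma pairStep_death (L : LC C) (f : C → ℝ) (st : Finset C × Finset (C × C)) (y : C)
    (hb : ¬ givesBirth L f y)
    (hEx : ∃! A : Finset C, A ⊆ st.1 ∧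
      HomBelow L f (f y) (∑ x ∈ A, canCycle L f x) (col L y)) :
    (pairStep L f st y).1 = st.1.erase (maxCellD f hEx.exists.choose y) := by
  rw [pairStep, if_neg hb]
  simp only [dif_pos hEx]

lemma maxCellD_mem (f : C → ℝ) {A : Finset C} (h : A.Nonempty) (d : C) :
    maxCellD f A d ∈ A := by
  unfold maxCellD
  rw [dif_pos h]
  exact (Finset.exists_max_image A f h).choose_spec.1

lemma foldl_inv (L : LC C) (f : C → ℝ) (hf : IsFilter L f) :
    ∀ l : List C, (∀ x ∈ l, x ∈ L.cells) → l.Pairwise (fun a b => f a < f b) →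
    (∀ x ∈ L.cells, ∀ z ∈ l, f x < f z → x ∈ l) →
    PairInv L f l.toFinset (l.foldl (pairStep L f) (∅, ∅)).1 := by
  intro l
  induction l using List.reverseRecOn with
  | nil =>
    intro _ _ _
    constructor
    · intro x hx
      exact absurd hx (Finset.notMem_empty x)
    · intro v hv _
      have hv0 : v = 0 := by
        funext z
        by_contra hz
        exact absurd (hv z hz) (Finset.notMem_empty z)
      refine ⟨∅, ⟨Finset.Subset.refl _, ?_⟩, ?_⟩
      · rw [Finset.sum_empty, add_zero, hv0]
        exact ⟨0, fun z hz => absurd rfl hz, (bdOp L).map_zero⟩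
      · intro B hB
        exact Finset.subset_empty.1 hB.1
  | append_singleton l y ih =>
    intro hcell hpw hcl
    have hpwa := List.pairwise_append.1 hpw
    have hcell' : ∀ x ∈ l, x ∈ L.cells := fun x hx => hcell x (List.mem_append_left _ hx)
    have hlt : ∀ a ∈ l, f a < f y := fun a ha =>
      hpwa.2.2 a ha y (List.mem_singleton_self y)
    have hcl' : ∀ x ∈ L.cells, ∀ z ∈ l, f x < f z → x ∈ l := by
      intro x hx z hz hxz
      rcases List.mem_append.1 (hcl x hx z (List.mem_append_left _ hz) hxz) with h' | h'
      · exact h'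
      · exfalso
        rw [List.mem_singleton] at h'
        subst h'
        exact absurd (lt_trans hxz (hlt z hz)) (lt_irrefl _)
    have hinv := ih hcell' hpwa.1 hcl'
    have hyc : y ∈ L.cells := hcell y (List.mem_append_right _ (List.mem_singleton_self y))
    have hynl : y ∉ l := fun hh => absurd (hlt y hh) (lt_irrefl _)
    have hynS : y ∉ l.toFinset := fun hh => hynl (List.mem_toFinset.1 hh)
    have hS : ∀ z, z ∈ l.toFinset ↔ z ∈ L.cells ∧ f z < f y := by
      intro z
      rw [List.mem_toFinset]
      constructor
      · intro hz
        exact ⟨hcell' z hz, hlt z hz⟩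
      · rintro ⟨h1, h2⟩
        rcases List.mem_append.1
            (hcl z h1 y (List.mem_append_right _ (List.mem_singleton_self y)) h2) with h' | h'
        · exact h'
        · exfalso
          rw [List.mem_singleton] at h'
          subst h'
          exact absurd h2 (lt_irrefl _)
    have hSins : (l ++ [y]).toFinset = insert y l.toFinset := by
      ext z
      simp [List.mem_toFinset, or_comm]
    have hfold : ((l ++ [y]).foldl (pairStep L f) (∅, ∅))
        = pairStep L f (l.foldl (pairStep L f) (∅, ∅)) y := by
      rw [List.foldl_append]
      rfl
    rw [hfold, hSins]
    by_cases hb : givesBirth L f y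
    · rw [pairStep_birth L f _ y hb]
      exact inv_birth L f hf hb hynS hS hinv
    · have hd : givesDeath L f y := by
        rcases cell_birth_or_death (L := L) (f := f) hyc with h' | h'
        · exact absurd h' hb
        · exact h'
      have hcolS : SuppIn l.toFinset (col L y) := by
        intro z hz
        exact (hS z).2 ⟨(L.bd_mem z y hz).1, hf.2 z y hz⟩
      have hEx0 := hinv.2 (col L y) hcolS (col_cycle L y)
      have hiff : ∀ A : Finset C,
          (A ⊆ (l.foldl (pairStep L f) (∅, ∅)).1 ∧
            InBdry L l.toFinset (col L y + ∑ x ∈ A, canCycle L f x)) ↔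
          (A ⊆ (l.foldl (pairStep L f) (∅, ∅)).1 ∧
            HomBelow L f (f y) (∑ x ∈ A, canCycle L f x) (col L y)) := by
        intro A
        apply and_congr_right
        intro _
        constructor
        · rintro ⟨c, hc, hbc⟩
          exact ⟨c, fun z hz => (hS z).1 (hc z hz), by rw [hbc, add_comm]⟩
        · rintro ⟨c, hc, hbc⟩
          exact ⟨c, fun z hz => (hS z).2 (hc z hz), by rw [hbc, add_comm]⟩
      have hEx : ∃! A : Finset C, A ⊆ (l.foldl (pairStep L f) (∅, ∅)).1 ∧
          HomBelow L f (f y) (∑ x ∈ A, canCycle L f x) (col L y) :=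
        (existsUnique_congr hiff).1 hEx0
      rw [pairStep_death L f _ y hb hEx]
      set A := hEx.exists.choose with hA
      have hAspec := hEx.exists.choose_spec
      have hAspec' : A ⊆ (l.foldl (pairStep L f) (∅, ∅)).1 ∧
          InBdry L l.toFinset (col L y + ∑ x ∈ A, canCycle L f x) :=
        (hiff A).2 hAspec
      have hAne : A.Nonempty := by
        rw [Finset.nonempty_iff_ne_empty]
        intro hAe
        have := hAspec'.2
        rw [hAe, Finset.sum_empty, add_zero] at this
        obtain ⟨c, hc, hbc⟩ := this
        exact hd.2 ⟨c, fun z hz => (hS z).1 (hc z hz), hbc⟩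
      exact inv_death L f hf hd hynS hS hinv hAspec'.1 hAspec'.2
        (maxCellD_mem f hAne y)

end Aux

/-- For a death-giving cell `y`, with `Y_a` the set of
birth-giving cells below `y` that are unpaired by the persistence pairing
restricted to the sublevel set below `y`, there is exactly one subset
`A ⊆ Y_a` such that `Σ_{x∈A} d_x` is homologous to `∂y` in the sublevel set
strictly below `y`. -/
theorem pairing_subset_exists_unique (L : LC C) (f : C → ℝ)
    (hf : IsFilter L f) (y : C) (hy : givesDeath L f y) :
    ∃! A : Finset C, A ⊆ unpairedBelow L f (f y) ∧
      HomBelow L f (f y) (∑ x ∈ A, canCycle L f x) (col L y) := by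
  obtain ⟨hmem, hpw⟩ := sorted_filter_spec L f hf (f y)
  set l := (sortedCells L f).filter (fun x => decide (f x < f y)) with hl
  have hcell : ∀ x ∈ l, x ∈ L.cells := fun x hx => ((hmem x).1 hx).1
  have hcl : ∀ x ∈ L.cells, ∀ z ∈ l, f x < f z → x ∈ l := by
    intro x hx z hz hlt
    exact (hmem x).2 ⟨hx, lt_trans hlt ((hmem z).1 hz).2⟩
  have hinv := foldl_inv L f hf l hcell hpw hcl
  have hS : ∀ z, z ∈ l.toFinset ↔ z ∈ L.cells ∧ f z < f y := by
    intro z; rw [List.mem_toFinset]; exact hmem z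
  have hY : unpairedBelow L f (f y) = (l.foldl (pairStep L f) (∅, ∅)).1 := by
    rw [hl]; rfl
  have hcolS : SuppIn l.toFinset (col L y) := fun z hz =>
    (hS z).2 ⟨(L.bd_mem z y hz).1, hf.2 z y hz⟩
  have hEx := hinv.2 (col L y) hcolS (col_cycle L y)
  rw [hY]
  refine (existsUnique_congr fun A => ?_).1 hEx
  apply and_congr_right
  intro _
  constructor
  · rintro ⟨c, hc, hbc⟩
    exact ⟨c, fun z hz => (hS z).1 (hc z hz), by rw [hbc, add_comm]⟩
  · rintro ⟨c, hc, hbc⟩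
    exact ⟨c, fun z hz => (hS z).2 (hc z hz), by rw [hbc, add_comm]⟩
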